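/- The class of HRSD characteristic functions equals the intersection of the classes of SD and HID characteristic functions: a characteristic function ψ is HRSD with parameter k if and only if it is both self-decomposable and Harris infinitely divisible with parameter k. Moreover, when ψ is HRSD, the component CF can be chosen as ψ_{c,p}(t) = ψ_c(t)·ψ_p(ct), where ψ_c(t) = ψ(t)/ψ(ct) and ψ_p(t) = ψ(t)/(p + (1-p)ψ(t)^k)^{1/k}. -/

import Mathlib

open MeasureTheory Set

/-- `ψ` is the characteristic function of some probability measure on `ℝ`. -/
def IsCF (ψ : ℝ → ℂ) : Prop :=
  ∃ μ : Measure ℝ, IsProbabilityMeasure μ ∧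
    ∀ t : ℝ, ψ t = ∫ x, Complex.exp (Complex.I * t * x) ∂μ

lemma cf_cont_integrand (t : ℝ) : Continuous fun x : ℝ => Complex.exp (Complex.I * t * x) := by
  exact Complex.continuous_exp.comp (continuous_const.mul Complex.continuous_ofReal)

lemma cf_norm_integrand (t x : ℝ) : ‖Complex.exp (Complex.I * t * x)‖ = 1 := by
  rw [Complex.norm_exp]
  have : (Complex.I * t * x).re = 0 := by simp
  rw [this, Real.exp_zero]

lemma IsCF.continuous {ψ : ℝ → ℂ} (h : IsCF ψ) : Continuous ψ := by
  obtain ⟨μ, hμ, hint⟩ := h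
  have : Continuous fun t : ℝ => ∫ x, Complex.exp (Complex.I * t * x) ∂μ := by
    apply MeasureTheory.continuous_of_dominated (bound := fun _ => (1:ℝ))
    · exact fun t => (cf_cont_integrand t).aestronglyMeasurable
    · exact fun t => Filter.Eventually.of_forall fun x => le_of_eq (cf_norm_integrand t x)
    · exact integrable_const 1
    · refine Filter.Eventually.of_forall fun x => ?_
      exact Complex.continuous_exp.comp ((continuous_const.mul Complex.continuous_ofReal).mul continuous_const)
  exact this.congr fun t => (hint t).symm |>.symm ▸ rfl

lemma IsCF.apply_zero {ψ : ℝ → ℂ} (h : IsCF ψ) : ψ 0 = 1 := by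
  obtain ⟨μ, hμ, hint⟩ := h
  rw [hint 0]
  simp [integral_const, measure_univ]

lemma isCF_one : IsCF (fun _ : ℝ => (1:ℂ)) := by
  refine ⟨Measure.dirac 0, inferInstance, fun t => ?_⟩
  rw [integral_dirac]
  simp

lemma IsCF.congr {ψ φ : ℝ → ℂ} (h : IsCF ψ) (he : ∀ t, ψ t = φ t) : IsCF φ := by
  obtain ⟨μ, hμ, hint⟩ := h
  exact ⟨μ, hμ, fun t => (he t).symm.trans (hint t)⟩

lemma IsCF.scale {ψ : ℝ → ℂ} (h : IsCF ψ) (c : ℝ) : IsCF (fun t => ψ (c * t)) := by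
  obtain ⟨μ, hμ, hint⟩ := h
  refine ⟨Measure.map (fun x => c * x) μ, Measure.isProbabilityMeasure_map (measurable_const_mul c).aemeasurable, fun t => ?_⟩
  show ψ (c*t) = _
  rw [hint (c * t), integral_map (measurable_const_mul c).aemeasurable (cf_cont_integrand t).aestronglyMeasurable]
  congr 1; ext x; push_cast; ring_nf

lemma IsCF.mul {ψ φ : ℝ → ℂ} (h1 : IsCF ψ) (h2 : IsCF φ) : IsCF (fun t => ψ t * φ t) := by
  obtain ⟨μ, hμ, hμi⟩ := h1
  obtain ⟨ν, hν, hνi⟩ := h2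
  refine ⟨Measure.map (fun q : ℝ × ℝ => q.1 + q.2) (μ.prod ν),
    Measure.isProbabilityMeasure_map (measurable_fst.add measurable_snd).aemeasurable, fun t => ?_⟩
  show ψ t * φ t = _
  rw [integral_map (φ := fun q : ℝ × ℝ => q.1 + q.2) (measurable_fst.add measurable_snd).aemeasurable (cf_cont_integrand t).aestronglyMeasurable]
  have h2 : ∀ q : ℝ × ℝ, ((q.1 + q.2 : ℝ) : ℂ) = (q.1:ℂ) + q.2 := by intro q; push_cast; ring
  simp_rw [h2]
  have : ∀ q : ℝ × ℝ, Complex.exp (Complex.I * t * (q.1 + q.2))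
      = Complex.exp (Complex.I * t * q.1) * Complex.exp (Complex.I * t * q.2) := by
    intro q; rw [← Complex.exp_add]; push_cast; ring_nf
  rw [MeasureTheory.integral_congr_ae (Filter.Eventually.of_forall this),
    MeasureTheory.integral_prod_mul (μ := μ) (ν := ν)
      (f := fun x : ℝ => Complex.exp (Complex.I * t * x))
      (g := fun x : ℝ => Complex.exp (Complex.I * t * x)), ← hμi t, ← hνi t]

/-- `z` is not a nonpositive real. -/
def NotNegReal (z : ℂ) : Prop := ∀ r : ℝ, r ≤ 0 → z ≠ (r:ℂ)

lemma NotNegReal.ne_zero {z : ℂ} (h : NotNegReal z) : z ≠ 0 := by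
  simpa using h 0 le_rfl

lemma NotNegReal.arg_ne_pi {z : ℂ} (h : NotNegReal z) : z.arg ≠ Real.pi := by
  intro harg
  rw [Complex.arg_eq_pi_iff] at harg
  exact h z.re (le_of_lt harg.1) (by exact Complex.ext (by simp) (by simp [harg.2]))

lemma NotNegReal.mem_slitPlane {z : ℂ} (h : NotNegReal z) : z ∈ Complex.slitPlane := by
  rw [Complex.mem_slitPlane_iff]
  by_contra hc
  push_neg at hc
  obtain ⟨h1, h2⟩ := hc
  exact h z.re (by linarith [h1]) (Complex.ext (by simp) (by simp [h2]))

lemma cpow_inv_ne_zero {z : ℂ} (hz : z ≠ 0) (w : ℂ) : z ^ w ≠ 0 := by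
  rw [Complex.cpow_def_of_ne_zero hz]
  exact Complex.exp_ne_zero _

lemma cpow_inv_pow {k : ℕ} (hk : 0 < k) {z : ℂ} (hz : z ≠ 0) :
    (z ^ ((k:ℂ)⁻¹)) ^ k = z := by
  rw [Complex.cpow_def_of_ne_zero hz, ← Complex.exp_nat_mul]
  have hkne : (k:ℂ) ≠ 0 := Nat.cast_ne_zero.mpr hk.ne'
  rw [show (k:ℂ) * (Complex.log z * (k:ℂ)⁻¹) = Complex.log z by field_simp]
  exact Complex.exp_log hz

lemma cpow_inv_inv {k : ℕ} {z : ℂ} (h : NotNegReal z) :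
    z⁻¹ ^ ((k:ℂ)⁻¹) = (z ^ ((k:ℂ)⁻¹))⁻¹ :=
  Complex.inv_cpow z _ h.arg_ne_pi

/-- A continuous `k`-th-root-of-unity valued function on `ℝ` equal to `1` at `0` is `1`. -/
lemma root_of_unity_const {k : ℕ} (hk : 0 < k) {g : ℝ → ℂ} (hg : Continuous g)
    (hroot : ∀ t, g t ^ k = 1) (h0 : g 0 = 1) : ∀ t, g t = 1 := by
  have hfin : Set.Finite {z : ℂ | z ^ k = 1} := by
    have : {z : ℂ | z ^ k = 1} ⊆ ↑(Polynomial.nthRootsFinset k (1:ℂ)) := by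
      intro z hz
      exact (Polynomial.mem_nthRootsFinset hk (1:ℂ)).mpr hz
    exact Set.Finite.subset (Polynomial.nthRootsFinset k (1:ℂ)).finite_toSet this
  set S : Set ℝ := {t | g t = 1} with hS
  have hclosed : IsClosed S := isClosed_eq hg continuous_const
  have hopen : IsOpen S := by
    rw [isOpen_iff_mem_nhds]
    intro t0 ht0
    have hT : IsClosed ({z : ℂ | z ^ k = 1} \ {1}) := (hfin.subset diff_subset).isClosed
    have h1 : (1:ℂ) ∈ ({z : ℂ | z ^ k = 1} \ {1})ᶜ := by simp
    have hnhds : ({z : ℂ | z ^ k = 1} \ {1})ᶜ ∈ nhds (g t0) := by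
      rw [show g t0 = 1 from ht0]
      exact hT.isOpen_compl.mem_nhds h1
    have := hg.continuousAt (x := t0) hnhds
    refine Filter.mem_of_superset this ?_
    intro t ht
    have : ¬(g t ^ k = 1 ∧ g t ≠ 1) := ht
    by_contra hne
    exact this ⟨hroot t, hne⟩
  have : S = Set.univ := IsClopen.eq_univ ⟨hclosed, hopen⟩ ⟨0, h0⟩
  intro t
  have : t ∈ S := this ▸ Set.mem_univ t
  exact this

/-- `ψ` is Harris randomly self-decomposable with parameter `k`. -/
def IsHRSD (k : ℕ) (ψ : ℝ → ℂ) : Prop :=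
  ∀ c ∈ Ioc (0:ℝ) 1, ∀ p ∈ Ico (0:ℝ) 1,
    ∃ φ : ℝ → ℂ, IsCF φ ∧
      ∀ t : ℝ, ψ t = φ t * ((p : ℂ) + (1 - (p : ℂ)) * (ψ (c * t)) ^ k) ^ ((k : ℂ)⁻¹)

/-- `ψ` is self-decomposable: each ratio ψ(t)/ψ(ct) is a CF. -/
def IsSD (ψ : ℝ → ℂ) : Prop :=
  ∀ c ∈ Ioo (0:ℝ) 1, IsCF (fun t => ψ t / ψ (c * t))

/-- `ψ` is Harris infinitely divisible with parameter `k`. -/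
def IsHID (k : ℕ) (ψ : ℝ → ℂ) : Prop :=
  ∀ p ∈ Ioo (0:ℝ) 1,
    ∃ ψp : ℝ → ℂ, IsCF ψp ∧
      ∀ t : ℝ, ψ t = ψp t /
        (((1 / p : ℝ) : ℂ) - (((1 / p : ℝ) : ℂ) - 1) * (ψp t) ^ k) ^ ((k : ℂ)⁻¹)

lemma kinv_ne_zero {k : ℕ} (hk : 0 < k) : ((k:ℂ)⁻¹) ≠ 0 :=
  inv_ne_zero (Nat.cast_ne_zero.mpr hk.ne')

/-- Under HRSD, `ψ(t)^k` is never a nonpositive real. -/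
lemma hrsd_notneg {k : ℕ} (hk : 0 < k) {ψ : ℝ → ℂ} (hne : ∀ t, ψ t ≠ 0)
    (h : IsHRSD k ψ) : ∀ t, NotNegReal (ψ t ^ k) := by
  intro t0 r hr heq
  rcases eq_or_lt_of_le hr with hr0 | hr0
  · exact pow_ne_zero k (hne t0) (by rw [heq, hr0, Complex.ofReal_zero])
  set q : ℝ := (-r) / (1 - r) with hq
  have h1r : (0:ℝ) < 1 - r := by linarith
  have hq0 : 0 ≤ q := le_of_lt (div_pos (by linarith) h1r)
  have hq1 : q < 1 := by
    rw [div_lt_one h1r]; linarith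
  obtain ⟨φ, -, heq'⟩ := h 1 ⟨zero_lt_one, le_rfl⟩ q ⟨hq0, hq1⟩
  have hsumR : q + (1 - q) * r = 0 := by
    rw [hq]; field_simp; ring
  have hbase : (q:ℂ) + (1 - (q:ℂ)) * (ψ (1 * t0)) ^ k = 0 := by
    rw [one_mul, heq]
    have := congrArg (fun x : ℝ => (x:ℂ)) hsumR
    push_cast at this
    simpa using this
  have := heq' t0
  rw [hbase, Complex.zero_cpow (kinv_ne_zero hk), mul_zero] at this
  exact hne t0 this

/-- Under HID, `ψ(t)^k` is never a nonpositive real. -/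
lemma hid_notneg {k : ℕ} (hk : 0 < k) {ψ : ℝ → ℂ} (hne : ∀ t, ψ t ≠ 0)
    (h : IsHID k ψ) : ∀ t, NotNegReal (ψ t ^ k) := by
  intro t0 r hr heq
  rcases eq_or_lt_of_le hr with hr0 | hr0
  · exact pow_ne_zero k (hne t0) (by rw [heq, hr0, Complex.ofReal_zero])
  set q : ℝ := (-r) / (1 - r) with hq
  have h1r : (0:ℝ) < 1 - r := by linarith
  have hq0 : 0 < q := div_pos (by linarith) h1r
  have hq1 : q < 1 := by rw [div_lt_one h1r]; linarith
  obtain ⟨ψp, -, heq'⟩ := h q ⟨hq0, hq1⟩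
  set b : ℂ := ψp t0 with hb
  set E : ℂ := ((1 / q : ℝ) : ℂ) - (((1 / q : ℝ) : ℂ) - 1) * b ^ k with hE
  have ht0 : ψ t0 = b / E ^ ((k:ℂ)⁻¹) := heq' t0
  have hEne : E ≠ 0 := by
    intro h0
    exact hne t0 (by rw [ht0, h0, Complex.zero_cpow (kinv_ne_zero hk), div_zero])
  have hak : (r:ℂ) * E = b ^ k := by
    rw [← heq, ht0, div_pow, cpow_inv_pow hk hEne, div_mul_cancel₀ _ hEne]
  -- multiply out: r * (1/q) - r*((1/q)-1)*b^k = b^k, and q + (1-q) r = 0 forces r = 0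
  have hqc : (q:ℂ) ≠ 0 := Complex.ofReal_ne_zero.mpr hq0.ne'
  have hsumR : q + (1 - q) * r = 0 := by
    rw [hq]; field_simp; ring
  have hsum : (q:ℂ) + (1 - (q:ℂ)) * (r:ℂ) = 0 := by
    have := congrArg (fun x : ℝ => (x:ℂ)) hsumR
    push_cast at this
    simpa using this
  have hrc : (r:ℂ) ≠ 0 := Complex.ofReal_ne_zero.mpr hr0.ne
  rw [hE] at hak
  push_cast at hak hsum
  apply hrc
  field_simp [hqc] at hak
  linear_combination hak + b ^ k * hsum

lemma notneg_S {p : ℝ} (hp : p ∈ Ico (0:ℝ) 1) {w : ℂ} (hw : NotNegReal w) :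
    NotNegReal ((p:ℂ) + (1 - (p:ℂ)) * w) := by
  intro r hr heq
  have h1p : (0:ℝ) < 1 - p := by linarith [hp.2]
  have h1pc : ((1:ℂ) - (p:ℂ)) ≠ 0 := by
    intro h0
    have : ((1 - p : ℝ) : ℂ) = 0 := by push_cast; linear_combination h0
    exact h1p.ne' (by exact_mod_cast this)
  have hw' : w = (((r - p) / (1 - p) : ℝ) : ℂ) := by
    push_cast
    field_simp
    linear_combination heq
  exact hw _ (div_nonpos_iff.mpr (Or.inr ⟨by linarith [hp.1], le_of_lt h1p⟩)) hw'

lemma hrsd_to_sd {k : ℕ} (hk : 0 < k) {ψ : ℝ → ℂ} (hψ : IsCF ψ) (hne : ∀ t, ψ t ≠ 0)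
    (h : IsHRSD k ψ) : IsSD ψ := by
  intro c hc
  obtain ⟨φ, hφ, heq⟩ := h c ⟨hc.1, hc.2.le⟩ 0 ⟨le_rfl, zero_lt_one⟩
  simp only [Complex.ofReal_zero, sub_zero, one_mul, zero_add] at heq
  have hφne : ∀ t, φ t ≠ 0 := by
    intro t h0
    exact hne t (by rw [heq t, h0, zero_mul])
  have hcont : Continuous fun t => ψ (c * t) :=
    hψ.continuous.comp (continuous_const.mul continuous_id)
  set g : ℝ → ℂ := fun t => ψ t / (φ t * ψ (c * t)) with hg
  have hgcont : Continuous g :=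
    hψ.continuous.div (hφ.continuous.mul hcont) fun t => mul_ne_zero (hφne t) (hne _)
  have hgroot : ∀ t, g t ^ k = 1 := by
    intro t
    have h1 : ψ t ^ k = φ t ^ k * ψ (c * t) ^ k := by
      rw [heq t, mul_pow, cpow_inv_pow hk (pow_ne_zero k (hne (c * t)))]
    simp only [hg, div_pow, mul_pow]
    rw [h1, div_self (mul_ne_zero (pow_ne_zero k (hφne t)) (pow_ne_zero k (hne (c * t))))]
  have hg0 : g 0 = 1 := by
    have h0 := heq 0
    rw [mul_zero, hψ.apply_zero, one_pow, Complex.one_cpow, mul_one] at h0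
    simp only [hg, mul_zero, hψ.apply_zero, ← h0, mul_one, div_one]
  have hgone := root_of_unity_const hk hgcont hgroot hg0
  refine hφ.congr fun t => ?_
  have := hgone t
  rw [hg] at this
  have hprod : ψ t = φ t * ψ (c * t) := by
    rw [div_eq_one_iff_eq (mul_ne_zero (hφne t) (hne _))] at this
    exact this
  rw [eq_comm, div_eq_iff (hne (c * t)), ← hprod]

lemma hrsd_to_hid {k : ℕ} (hk : 0 < k) {ψ : ℝ → ℂ} (hψ : IsCF ψ) (hne : ∀ t, ψ t ≠ 0)
    (h : IsHRSD k ψ) : IsHID k ψ := by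
  intro p hp
  have hnn := hrsd_notneg hk hne h
  obtain ⟨φ, hφ, heq⟩ := h 1 ⟨zero_lt_one, le_rfl⟩ p ⟨hp.1.le, hp.2⟩
  simp only [one_mul] at heq
  refine ⟨φ, hφ, fun t => ?_⟩
  set S : ℂ := (p:ℂ) + (1 - (p:ℂ)) * ψ t ^ k with hS
  have hSnn : NotNegReal S := notneg_S ⟨hp.1.le, hp.2⟩ (hnn t)
  have hSne : S ≠ 0 := hSnn.ne_zero
  have hAne : S ^ ((k:ℂ)⁻¹) ≠ 0 := cpow_inv_ne_zero hSne _
  have hφt : φ t = ψ t / S ^ ((k:ℂ)⁻¹) := by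
    rw [heq t, mul_div_cancel_right₀ _ hAne]
  have hφk : φ t ^ k = ψ t ^ k / S := by
    rw [hφt, div_pow, cpow_inv_pow hk hSne]
  have hpc : (p:ℂ) ≠ 0 := Complex.ofReal_ne_zero.mpr hp.1.ne'
  have hD : ((1 / p : ℝ) : ℂ) - (((1 / p : ℝ) : ℂ) - 1) * φ t ^ k = S⁻¹ := by
    rw [hφk]
    push_cast
    rw [hS]
    field_simp
    have hSne' : (p:ℂ) + (1 - p) * ψ t ^ k ≠ 0 := hSne
    rw [eq_div_iff hSne', sub_mul, div_mul_cancel₀ _ hSne']; ring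
  rw [hD, cpow_inv_inv hSnn, div_eq_mul_inv, inv_inv]
  exact heq t

/-- Under HID, `ψ` is pointwise the principal `k`-th root of `ψ^k`. -/
lemma hid_principal_root {k : ℕ} (hk : 0 < k) {ψ : ℝ → ℂ} (hψ : IsCF ψ) (hne : ∀ t, ψ t ≠ 0)
    (h : IsHID k ψ) : ∀ t, (ψ t ^ k) ^ ((k:ℂ)⁻¹) = ψ t := by
  have hnn := hid_notneg hk hne h
  set g : ℝ → ℂ := fun t => (ψ t ^ k) ^ ((k:ℂ)⁻¹) / ψ t with hg
  have hgcont : Continuous g := by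
    apply Continuous.div _ hψ.continuous hne
    rw [continuous_iff_continuousAt]
    intro t
    exact ContinuousAt.cpow (hψ.continuous.pow k).continuousAt continuousAt_const (hnn t).mem_slitPlane
  have hgroot : ∀ t, g t ^ k = 1 := by
    intro t
    simp only [hg, div_pow]
    rw [cpow_inv_pow hk (pow_ne_zero k (hne t)), div_self (pow_ne_zero k (hne t))]
  have hg0 : g 0 = 1 := by
    simp only [hg, hψ.apply_zero, one_pow, Complex.one_cpow, div_one]
  intro t
  have := root_of_unity_const hk hgcont hgroot hg0 t
  rw [hg] at this
  rw [div_eq_one_iff_eq (hne t)] at this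
  exact this

/-- Under HID (plus nonvanishing), the HID component is `ψ/(p+(1-p)ψ^k)^{1/k}`, a CF,
for every `p ∈ [0,1)`. -/
lemma hid_component_cf {k : ℕ} (hk : 0 < k) {ψ : ℝ → ℂ} (hψ : IsCF ψ) (hne : ∀ t, ψ t ≠ 0)
    (h : IsHID k ψ) : ∀ p ∈ Ico (0:ℝ) 1,
    IsCF (fun s => ψ s / ((p:ℂ) + (1 - (p:ℂ)) * ψ s ^ k) ^ ((k:ℂ)⁻¹)) := by
  intro p hp
  have hnn := hid_notneg hk hne h
  rcases eq_or_lt_of_le hp.1 with hp0 | hp0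
  · refine isCF_one.congr fun s => ?_
    rw [← hp0]
    simp only [Complex.ofReal_zero, sub_zero, one_mul, zero_add]
    rw [hid_principal_root hk hψ hne h s, div_self (hne s)]
  · obtain ⟨ψp, hψp, heq⟩ := h p ⟨hp0, hp.2⟩
    refine hψp.congr fun s => ?_
    set S : ℂ := (p:ℂ) + (1 - (p:ℂ)) * ψ s ^ k with hS
    have hSnn : NotNegReal S := notneg_S hp (hnn s)
    have hSne : S ≠ 0 := hSnn.ne_zero
    set E : ℂ := ((1 / p : ℝ) : ℂ) - (((1 / p : ℝ) : ℂ) - 1) * ψp s ^ k with hE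
    have hts : ψ s = ψp s / E ^ ((k:ℂ)⁻¹) := heq s
    have hEne : E ≠ 0 := by
      intro h0
      exact hne s (by rw [hts, h0, Complex.zero_cpow (kinv_ne_zero hk), div_zero])
    have hψknE : ψ s ^ k * E = ψp s ^ k := by
      rw [hts, div_pow, cpow_inv_pow hk hEne, div_mul_cancel₀ _ hEne]
    have hpc : (p:ℂ) ≠ 0 := Complex.ofReal_ne_zero.mpr hp0.ne'
    have hES : E = S⁻¹ := by
      rw [hE] at hψknE ⊢
      rw [hS]
      push_cast at hψknE ⊢
      have hpinv : 1 / (p:ℂ) * p = 1 := one_div_mul_cancel hpc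
      refine (inv_eq_of_mul_eq_one_left ?_).symm
      linear_combination ((1:ℂ) - p) * hψknE + (1 - ψp s ^ k) * hpinv
    have hEk : E ^ ((k:ℂ)⁻¹) = (S ^ ((k:ℂ)⁻¹))⁻¹ := by
      rw [hES, cpow_inv_inv hSnn]
    rw [hts, hEk]
    field_simp
    rw [mul_div_assoc, div_self (cpow_inv_ne_zero hSne _), mul_one]

lemma sd_hid_to_hrsd {k : ℕ} (hk : 0 < k) {ψ : ℝ → ℂ} (hψ : IsCF ψ) (hne : ∀ t, ψ t ≠ 0)
    (hsd : IsSD ψ) (hhid : IsHID k ψ) : IsHRSD k ψ := by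
  intro c hc p hp
  have hnn := hid_notneg hk hne hhid
  have h1 : IsCF (fun t => ψ t / ψ (c * t)) := by
    rcases eq_or_lt_of_le hc.2 with hc1 | hc1
    · refine isCF_one.congr fun t => ?_
      rw [hc1, one_mul, div_self (hne t)]
    · exact hsd c ⟨hc.1, hc1⟩
  have h2 : IsCF (fun t => ψ (c * t) / ((p:ℂ) + (1 - (p:ℂ)) * ψ (c * t) ^ k) ^ ((k:ℂ)⁻¹)) :=
    (hid_component_cf hk hψ hne hhid p hp).scale c
  refine ⟨_, h1.mul h2, fun t => ?_⟩
  have hSnn : NotNegReal ((p:ℂ) + (1 - (p:ℂ)) * ψ (c * t) ^ k) := notneg_S hp (hnn (c * t))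
  have hAne : ((p:ℂ) + (1 - (p:ℂ)) * ψ (c * t) ^ k) ^ ((k:ℂ)⁻¹) ≠ 0 :=
    cpow_inv_ne_zero hSnn.ne_zero _
  have hct := hne (c * t)
  field_simp
  rw [mul_div_assoc, div_self (cpow_inv_ne_zero hSnn.ne_zero _), mul_one]

/-- Proposition 2.1: C_HRSD = C_SD ∩ C_HID, and the component CF can be chosen as
ψ_{c,p}(t) = ψ_c(t)·ψ_p(ct) with ψ_c(t) = ψ(t)/ψ(ct),
ψ_p(t) = ψ(t)/(p + (1-p)ψ(t)^k)^{1/k}. -/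
theorem hrsd_iff_sd_and_hid (k : ℕ) (hk : 0 < k) (ψ : ℝ → ℂ) (hψ : IsCF ψ)
    (hne : ∀ t, ψ t ≠ 0) :
    (IsHRSD k ψ ↔ IsSD ψ ∧ IsHID k ψ) ∧
    (IsHRSD k ψ →
      ∀ c ∈ Ioc (0:ℝ) 1, ∀ p ∈ Ico (0:ℝ) 1, ∀ t : ℝ,
        ψ t = (ψ t / ψ (c * t)) *
          (ψ (c * t) / ((p : ℂ) + (1 - (p : ℂ)) * (ψ (c * t)) ^ k) ^ ((k : ℂ)⁻¹)) *
          ((p : ℂ) + (1 - (p : ℂ)) * (ψ (c * t)) ^ k) ^ ((k : ℂ)⁻¹)) := by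
  constructor
  · constructor
    · intro h
      exact ⟨hrsd_to_sd hk hψ hne h, hrsd_to_hid hk hψ hne h⟩
    · rintro ⟨hsd, hhid⟩
      exact sd_hid_to_hrsd hk hψ hne hsd hhid
  · intro h c hc p hp t
    have hnn := hrsd_notneg hk hne h
    have hSnn := notneg_S hp (hnn (c * t))
    have hAne := cpow_inv_ne_zero hSnn.ne_zero ((k:ℂ)⁻¹)
    have hct := hne (c * t)
    rw [mul_assoc, div_mul_cancel₀ _ hAne, div_mul_cancel₀ _ hct]
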